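/- Let m be an odd natural number and l a natural number with m ≤ l. Then H_l^m(−2) ≡ 1 (mod 2), i.e. the 2-adic norm of H_l^m(−2) − 1 is at most 1/2. -/

import Mathlib

/-- The coefficient `σ_l^m(k)` of the Holt–Ille polynomial `H_l^m`. -/
def sigmaLM (l m k : ℕ) : ℚ :=
  if (l + m) % 2 = 0 then
    (-2 : ℚ) ^ k * (((l - m) / 2).choose k : ℚ) * (((l + m) / 2).choose k : ℚ) /
      (((2 * k).choose k : ℚ))
  else
    (-2 : ℚ) ^ k * (((l - m) / 2).choose k : ℚ) * (((l + m) / 2).choose k : ℚ) /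
      ((((2 * k).choose k : ℚ)) * (2 * (k : ℚ) + 1))

/-- The value `H_l^m(−2) = Σ_{k=0}^{⌊(l−m)/2⌋} σ_l^m(k)`. -/
def HLM (l m : ℕ) : ℚ := ∑ k ∈ Finset.range ((l - m) / 2 + 1), sigmaLM l m k

/-- `a ≡ b (mod 2^N)` for rationals (with odd denominators), expressed via the 2-adic
norm on `ℚ₂`: it means `‖a − b‖₂ ≤ 2^(−N)`. -/
def Cong2 (a b : ℚ) (N : ℕ) : Prop :=
  ‖((a - b : ℚ) : ℚ_[2])‖ ≤ (2 : ℝ) ^ (-(N : ℤ))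

/-- The sum of binary digits of `k ≥ 2` is at most `k - 1`. -/
lemma digitSum_le (k : ℕ) (hk : 2 ≤ k) : (Nat.digits 2 k).sum + 1 ≤ k := by
  have h := Nat.digits_def' (b := 2) (by norm_num) (show 0 < k by omega)
  have h2 : (Nat.digits 2 (k / 2)).sum ≤ k / 2 := Nat.digit_sum_le 2 (k / 2)
  rw [h]; simp only [List.sum_cons]; omega

/-- Kummer: the 2-adic valuation of the central binomial coefficient is the binary
digit sum of `k`. -/
lemma centralBinom_val (k : ℕ) (hk : 0 < k) :
    padicValNat 2 ((2*k).choose k) = (Nat.digits 2 k).sum := by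
  have h := sub_one_mul_padicValNat_choose_eq_sub_sum_digits' (p := 2) (k := k) (n := k)
  have hd : Nat.digits 2 (k + k) = 0 :: Nat.digits 2 k := by
    rw [Nat.digits_def' (b := 2) (by norm_num) (by omega),
      show (k+k) % 2 = 0 by omega, show (k+k)/2 = k by omega]
  rw [hd] at h
  simp only [List.sum_cons, zero_add] at h
  rw [show 2*k = k + k by ring]
  have := Nat.digit_sum_le 2 k
  omega

/-- For odd `m ≤ l` and `1 ≤ k ≤ ⌊(l−m)/2⌋`, the coefficient `σ_l^m(k)` is nonzero with
2-adic valuation at least 1. -/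
lemma sigma_key (l m k : ℕ) (hm : m % 2 = 1) (hml : m ≤ l) (hk : 1 ≤ k)
    (hkA : k ≤ (l - m) / 2) :
    sigmaLM l m k ≠ 0 ∧ (1:ℤ) ≤ padicValRat 2 (sigmaLM l m k) := by
  set A := (l - m) / 2 with hA
  set B := (l + m) / 2 with hB
  have hkB : k ≤ B := le_trans hkA (Nat.div_le_div_right (by omega))
  have hCA : (A.choose k : ℚ) ≠ 0 := Nat.cast_ne_zero.mpr (Nat.choose_pos hkA).ne'
  have hCB : (B.choose k : ℚ) ≠ 0 := Nat.cast_ne_zero.mpr (Nat.choose_pos hkB).ne'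
  have hD : ((2*k).choose k : ℚ) ≠ 0 := Nat.cast_ne_zero.mpr (Nat.choose_pos (by omega)).ne'
  have hP : ((-2:ℚ))^k ≠ 0 := by norm_num
  have hN : ((-2:ℚ))^k * (A.choose k : ℚ) * (B.choose k : ℚ) ≠ 0 :=
    mul_ne_zero (mul_ne_zero hP hCA) hCB
  have hval2 : padicValRat 2 (-2 : ℚ) = 1 := by
    rw [padicValRat.neg]; exact_mod_cast padicValRat.self (p := 2) (by norm_num)
  have hvN : padicValRat 2 ((-2:ℚ)^k * (A.choose k : ℚ) * (B.choose k : ℚ)) =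
      k + padicValNat 2 (A.choose k) + padicValNat 2 (B.choose k) := by
    rw [padicValRat.mul (mul_ne_zero hP hCA) hCB, padicValRat.mul hP hCA,
      padicValRat.pow (q := (-2:ℚ)), hval2, padicValRat.of_nat,
      padicValRat.of_nat]
    ring
  have hvD : padicValRat 2 (((2*k).choose k : ℚ)) = padicValNat 2 ((2*k).choose k) :=
    padicValRat.of_nat
  have hDbound : (padicValNat 2 ((2*k).choose k) : ℤ)
      ≤ k + padicValNat 2 (A.choose k) + padicValNat 2 (B.choose k) - 1 := by
    rcases eq_or_lt_of_le hk with h1 | h2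
    · -- k = 1 : one of A, B is even (since A + B is odd), giving an extra factor 2
      have hk1 : k = 1 := h1.symm
      subst hk1
      have hv2 : padicValNat 2 ((2*1).choose 1) = 1 := by norm_num [padicValNat.self]
      have hpar : A % 2 = 0 ∨ B % 2 = 0 := by omega
      have hch : ∀ n : ℕ, n.choose 1 = n := fun n => Nat.choose_one_right n
      rw [hv2, hch, hch]
      rcases hpar with h | h
      · have : 1 ≤ padicValNat 2 A :=
          one_le_padicValNat_of_dvd (by omega) (by omega)
        omega
      · have : 1 ≤ padicValNat 2 B :=
          one_le_padicValNat_of_dvd (by omega) (by omega)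
        omega
    · -- k ≥ 2 : the valuation of the central binomial is at most k - 1
      have := centralBinom_val k (by omega)
      have := digitSum_le k (by omega)
      omega
  constructor
  · unfold sigmaLM
    split
    · exact div_ne_zero hN hD
    · exact div_ne_zero hN (mul_ne_zero hD (by positivity))
  · unfold sigmaLM
    split
    · rw [padicValRat.div hN hD, hvN, hvD]; omega
    · have hc : (2 * (k:ℚ) + 1) = ((2*k+1 : ℕ) : ℚ) := by push_cast; ring
      have hvc : padicValRat 2 (2 * (k:ℚ) + 1) = 0 := by
        rw [hc, padicValRat.of_nat]
        norm_cast
        exact padicValNat.eq_zero_of_not_dvd (by omega)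
      rw [padicValRat.div hN (mul_ne_zero hD (by positivity)),
        padicValRat.mul hD (by positivity), hvN, hvD, hvc]
      omega

/-- Each coefficient `σ_l^m(k)` with `k ≥ 1` has 2-adic norm at most `1/2`. -/
lemma sigma_norm (l m k : ℕ) (hm : m % 2 = 1) (hml : m ≤ l) (hk : 1 ≤ k)
    (hkA : k ≤ (l - m) / 2) :
    ‖((sigmaLM l m k : ℚ) : ℚ_[2])‖ ≤ (2:ℝ) ^ (-(1:ℤ)) := by
  obtain ⟨hne, hval⟩ := sigma_key l m k hm hml hk hkA
  rw [Padic.eq_padicNorm, padicNorm.eq_zpow_of_nonzero hne]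
  push_cast
  apply zpow_le_zpow_right₀ (by norm_num)
  omega

/-- For odd `m ≤ l`, `H_l^m(−2) ≡ 1 (mod 2)`. -/
theorem HLM_cong_one_of_odd (m l : ℕ) (hm : Odd m) (hml : m ≤ l) :
    Cong2 (HLM l m) 1 1 := by
  have hm2 : m % 2 = 1 := Nat.odd_iff.mp hm
  have h0 : sigmaLM l m 0 = 1 := by unfold sigmaLM; split <;> norm_num
  have hsum : HLM l m - 1 = ∑ k ∈ Finset.Ico 1 ((l-m)/2 + 1), sigmaLM l m k := by
    unfold HLM
    rw [Finset.range_eq_Ico, Finset.sum_eq_sum_Ico_succ_bot (by omega), h0]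
    ring
  unfold Cong2
  rw [hsum]
  push_cast
  apply IsUltrametricDist.norm_sum_le_of_forall_le_of_nonneg (by positivity)
  intro i hi
  simp only [Finset.mem_Ico] at hi
  exact sigma_norm l m i hm2 hml hi.1 (by omega)
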